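/- Let K* ⊆ ℝⁿ and let T* : K* → ℝ be nonnegative, with Epi(T*) = {(x,t) ∈ K* × ℝ : t ≥ T*(x)} ⊆ ℝⁿ⁺¹. For each p ∈ ℕ let K_p ⊆ ℝⁿ, let T_p : K_p → ℝ be nonnegative with Epi(T_p) = {(x,t) ∈ K_p × ℝ : t ≥ T_p(x)}, and let η_p > 0 with η_p → 0. Suppose: (i) for every p, Epi(T*) ⊆ Epi(T_p) + η_pB̄ₙ₊₁; and (ii) for every strictly increasing sequence (p_j) and every sequence of points z_j ∈ Epi(T_{p_j}) + η_{p_j}B̄ₙ₊₁ converging in ℝⁿ⁺¹ to a point z, one has z ∈ Epi(T*). Then for every x ∈ K*, the sets (x + η_pB̄ₙ) ∩ K_p are nonempty and lim_{p→∞} inf_{x' ∈ (x+η_pB̄ₙ)∩K_p} T_p(x') = T*(x). -/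

import Mathlib

open Metric Pointwise Filter

/-- The Euclidean space `ℝⁿ⁺¹ = ℝⁿ × ℝ` with the Euclidean (ℓ²) norm. -/
abbrev EuclideanProd (n : ℕ) := WithLp 2 (EuclideanSpace ℝ (Fin n) × ℝ)

/-- The epigraph of `T : K → ℝ`, viewed as a subset of `ℝⁿ⁺¹`. -/
def epigraph {n : ℕ} (K : Set (EuclideanSpace ℝ (Fin n)))
    (T : EuclideanSpace ℝ (Fin n) → ℝ) : Set (EuclideanProd n) :=
  {p | (WithLp.equiv 2 (EuclideanSpace ℝ (Fin n) × ℝ) p).1 ∈ K ∧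
      T (WithLp.equiv 2 (EuclideanSpace ℝ (Fin n) × ℝ) p).1 ≤
        (WithLp.equiv 2 (EuclideanSpace ℝ (Fin n) × ℝ) p).2}

-- components are dominated by the L2 product norm
lemma fst_norm_le {α β : Type*} [SeminormedAddCommGroup α] [SeminormedAddCommGroup β]
    (z : WithLp 2 (α × β)) : ‖z.fst‖ ≤ ‖z‖ := by
  rw [WithLp.prod_norm_eq_of_L2]
  calc ‖z.fst‖ = Real.sqrt (‖z.fst‖ ^ 2) := by rw [Real.sqrt_sq (norm_nonneg _)]
  _ ≤ _ := Real.sqrt_le_sqrt (by nlinarith [sq_nonneg ‖z.snd‖])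

lemma snd_norm_le {α β : Type*} [SeminormedAddCommGroup α] [SeminormedAddCommGroup β]
    (z : WithLp 2 (α × β)) : ‖z.snd‖ ≤ ‖z‖ := by
  rw [WithLp.prod_norm_eq_of_L2]
  calc ‖z.snd‖ = Real.sqrt (‖z.snd‖ ^ 2) := by rw [Real.sqrt_sq (norm_nonneg _)]
  _ ≤ _ := Real.sqrt_le_sqrt (by nlinarith [sq_nonneg ‖z.fst‖])


/-- Pointwise convergence of approximate minimal-time functions under epigraphic
convergence: if (i) each dilated epigraph `Epi(T_p) + η_pB̄` contains `Epi(T*)` and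
(ii) the Kuratowski upper limit of the dilated epigraphs is contained in `Epi(T*)`,
then for every `x ∈ K*` the perturbed minima `inf_{x' ∈ (x+η_pB̄)∩K_p} T_p(x')`
are well defined and converge to `T*(x)`. -/
theorem perturbed_inf_tendsto_Tstar
    {n : ℕ} (Kstar : Set (EuclideanSpace ℝ (Fin n)))
    (Tstar : EuclideanSpace ℝ (Fin n) → ℝ) (hTstar : ∀ y ∈ Kstar, 0 ≤ Tstar y)
    (K : ℕ → Set (EuclideanSpace ℝ (Fin n)))
    (T : ℕ → EuclideanSpace ℝ (Fin n) → ℝ) (hT : ∀ p, ∀ y ∈ K p, 0 ≤ T p y)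
    (η : ℕ → ℝ) (hηpos : ∀ p, 0 < η p) (hηlim : Tendsto η atTop (nhds 0))
    (hlow : ∀ p, epigraph Kstar Tstar ⊆
      epigraph (K p) (T p) + closedBall (0 : EuclideanProd n) (η p))
    (hupper : ∀ φ : ℕ → ℕ, StrictMono φ →
      ∀ (z : ℕ → EuclideanProd n) (zlim : EuclideanProd n),
        (∀ j, z j ∈ epigraph (K (φ j)) (T (φ j)) +
          closedBall (0 : EuclideanProd n) (η (φ j))) →
        Tendsto z atTop (nhds zlim) → zlim ∈ epigraph Kstar Tstar) :
    ∀ x ∈ Kstar, (∀ p, (closedBall x (η p) ∩ K p).Nonempty) ∧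
      Tendsto (fun p => sInf (T p '' (closedBall x (η p) ∩ K p))) atTop
        (nhds (Tstar x)) := by
  intro x hx
  -- the point (x, Tstar x) in the epigraph of Tstar
  set w : EuclideanProd n := (WithLp.equiv 2 _).symm (x, Tstar x) with hw
  have hwmem : w ∈ epigraph Kstar Tstar := ⟨hx, le_refl _⟩
  -- for every p, find a point of K p within η p of x with small T value
  have key : ∀ p, ∃ y, y ∈ closedBall x (η p) ∩ K p ∧ T p y ≤ Tstar x + η p := by
    intro p
    obtain ⟨a, ha, b, hb, hab⟩ := hlow p hwmem
    refine ⟨a.fst, ⟨?_, ha.1⟩, ?_⟩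
    · rw [mem_closedBall, dist_comm, dist_eq_norm]
      have hab' : a + b = w := hab
      have h1 : ‖(a + b).fst - a.fst‖ ≤ ‖b‖ := by
        rw [WithLp.add_fst, add_sub_cancel_left]; exact fst_norm_le b
      have hbn : ‖b‖ ≤ η p := by simpa [mem_closedBall, dist_zero_right] using hb
      have hx1 : (a + b).fst = x := by rw [hab']; rfl
      calc ‖x - a.fst‖ = ‖(a + b).fst - a.fst‖ := by rw [hx1]
      _ ≤ ‖b‖ := h1
      _ ≤ η p := hbn
    · have hab' : a + b = w := hab
      have h2 : ‖(a + b).snd - a.snd‖ ≤ ‖b‖ := by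
        rw [WithLp.add_snd, add_sub_cancel_left]; exact snd_norm_le b
      have hbn : ‖b‖ ≤ η p := by simpa [mem_closedBall, dist_zero_right] using hb
      have hx2 : (a + b).snd = Tstar x := by rw [hab']; rfl
      have habs : |Tstar x - a.snd| ≤ η p := by
        rw [← hx2, ← Real.norm_eq_abs]; exact le_trans h2 hbn
      have h3 := (abs_le.1 habs).1
      have hTa : T p a.fst ≤ a.snd := ha.2
      linarith
  have hne : ∀ p, (closedBall x (η p) ∩ K p).Nonempty := fun p =>
    ⟨(key p).choose, (key p).choose_spec.1⟩
  refine ⟨hne, ?_⟩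
  set m : ℕ → ℝ := fun p => sInf (T p '' (closedBall x (η p) ∩ K p)) with hm
  have hbdd : ∀ p, BddBelow (T p '' (closedBall x (η p) ∩ K p)) := by
    intro p
    exact ⟨0, fun t ⟨y, hy, hty⟩ => hty ▸ hT p y hy.2⟩
  have hmnonneg : ∀ p, 0 ≤ m p := fun p =>
    le_csInf ((hne p).image _) (fun t ⟨y, hy, hty⟩ => hty ▸ hT p y hy.2)
  have hmub : ∀ p, m p ≤ Tstar x + η p := by
    intro p
    obtain ⟨y, hy, hty⟩ := key p
    exact le_trans (csInf_le (hbdd p) ⟨y, hy, rfl⟩) hty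
  rw [tendsto_order]
  constructor
  · -- lower bound: ∀ b < Tstar x, eventually b < m p
    intro b hb
    by_contra hcon
    rw [not_eventually] at hcon
    push_neg at hcon
    obtain ⟨φ, hφmono, hφ⟩ := extraction_of_frequently_atTop
      (hcon.mono (fun p hp => hp))
    -- along φ, m (φ j) ≤ b < Tstar x
    set ε := Tstar x - b with hε
    have hεpos : 0 < ε := by simp [hε]; linarith
    -- choose points with T value < b + ε/2
    have hsel : ∀ j, ∃ y, y ∈ closedBall x (η (φ j)) ∩ K (φ j) ∧
        T (φ j) y < b + ε / 2 := by
      intro j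
      have h1 : m (φ j) < b + ε / 2 := lt_of_le_of_lt (hφ j) (by linarith)
      obtain ⟨t, ⟨y, hy, hty⟩, htlt⟩ := (csInf_lt_iff (hbdd _) ((hne _).image _)).1 h1
      exact ⟨y, hy, hty ▸ htlt⟩
    choose y hy hylt using hsel
    -- T values lie in the compact interval [0, Tstar x]
    have hmemIcc : ∀ j, T (φ j) (y j) ∈ Set.Icc (0:ℝ) (Tstar x) := by
      intro j
      refine ⟨hT _ _ (hy j).2, ?_⟩
      have := hylt j
      have : T (φ j) (y j) < Tstar x - ε / 2 := by simp [hε] at this ⊢; linarith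
      linarith [hεpos]
    obtain ⟨t, htmem, ψ, hψmono, hψlim⟩ :=
      (isCompact_Icc (a := (0:ℝ)) (b := Tstar x)).tendsto_subseq hmemIcc
    -- the y's converge to x
    have hηφψ : Tendsto (fun j => η (φ (ψ j))) atTop (nhds 0) :=
      hηlim.comp ((hφmono.comp hψmono).tendsto_atTop)
    have hyx : Tendsto (fun j => y (ψ j)) atTop (nhds x) := by
      rw [tendsto_iff_dist_tendsto_zero]
      refine squeeze_zero (fun j => dist_nonneg) (fun j => ?_) hηφψ
      exact (hy (ψ j)).1
    -- build the sequence in the dilated epigraphs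
    set z : ℕ → EuclideanProd n := fun j =>
      (WithLp.equiv 2 _).symm (y (ψ j), T (φ (ψ j)) (y (ψ j))) with hz
    have hzmem : ∀ j, z j ∈ epigraph (K ((φ ∘ ψ) j)) (T ((φ ∘ ψ) j)) +
        closedBall (0 : EuclideanProd n) (η ((φ ∘ ψ) j)) := by
      intro j
      refine ⟨z j, ⟨(hy (ψ j)).2, le_refl _⟩, 0, ?_, add_zero _⟩
      simp [le_of_lt (hηpos _)]
    have hzlim : Tendsto z atTop (nhds ((WithLp.equiv 2 _).symm (x, t))) := by
      have hcont := (WithLp.prod_continuous_toLp 2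
        (EuclideanSpace ℝ (Fin n)) ℝ).continuousAt (x := (x, t))
      have hpair : Tendsto (fun j => (y (ψ j), T (φ (ψ j)) (y (ψ j))))
          atTop (nhds (x, t)) := hyx.prodMk_nhds hψlim
      exact (hcont.tendsto).comp hpair
    have hfinal := hupper (φ ∘ ψ) (hφmono.comp hψmono) z _ hzmem hzlim
    -- zlim ∈ epigraph Kstar Tstar gives Tstar x ≤ t
    have ht1 : Tstar x ≤ t := hfinal.2
    -- but t ≤ Tstar x - ε/2
    have ht2 : t ≤ Tstar x - ε / 2 := by
      refine le_of_tendsto hψlim (Filter.Eventually.of_forall fun j => ?_)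
      have h4 := hylt (ψ j)
      simp only [Function.comp_apply, hε] at h4 ⊢
      linarith
    linarith
  · -- upper bound: ∀ b > Tstar x, eventually m p < b
    intro b hb
    have : ∀ᶠ p in atTop, η p < b - Tstar x := by
      have := hηlim.eventually (eventually_lt_nhds (by linarith : (0:ℝ) < b - Tstar x))
      exact this
    exact this.mono fun p hp => lt_of_le_of_lt (hmub p) (by linarith)
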